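/- Let R be a Noetherian integral domain and let 0 → M₀ → M₁ → M₂ → 0 be a short exact sequence of R-modules. If M₀ and M₂ are almost finitely generated, then M₁ is almost finitely generated. -/

import Mathlib

/-- An `R`-module `M` is *almost trivial* if some nonzero `r : R` annihilates `M`. -/
def AlmostTrivial (R : Type*) (M : Type*) [CommRing R] [AddCommGroup M] [Module R M] : Prop :=
  ∃ r : R, r ≠ 0 ∧ ∀ m : M, r • m = 0

/-- An `R`-module `M` is *almost finitely generated* if its torsion submodule is almost
trivial and the quotient `M/tors(M)` is a finitely generated `R`-module. -/
def AlmostFG (R : Type*) (M : Type*) [CommRing R] [AddCommGroup M] [Module R M] : Prop :=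
  AlmostTrivial R (Submodule.torsion R M) ∧ Module.Finite R (M ⧸ Submodule.torsion R M)

theorem almostFG_of_ses_middle
    {R M₀ M₁ M₂ : Type*} [CommRing R] [IsDomain R] [IsNoetherianRing R]
    [AddCommGroup M₀] [Module R M₀] [AddCommGroup M₁] [Module R M₁]
    [AddCommGroup M₂] [Module R M₂]
    (f : M₀ →ₗ[R] M₁) (g : M₁ →ₗ[R] M₂)
    (hf : Function.Injective f) (hg : Function.Surjective g) (hfg : Function.Exact f g)
    (h₀ : AlmostFG R M₀) (h₂ : AlmostFG R M₂) :
    AlmostFG R M₁ := by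
  obtain ⟨⟨r₀, hr₀, ha₀⟩, hfin₀⟩ := h₀
  obtain ⟨⟨r₂, hr₂, ha₂⟩, hfin₂⟩ := h₂
  haveI := hfin₀
  haveI := hfin₂
  -- torsion elements of M₁ are mapped by g into torsion of M₂
  have hgt : ∀ m : M₁, m ∈ Submodule.torsion R M₁ → g m ∈ Submodule.torsion R M₂ := by
    intro m hm
    obtain ⟨s, hs⟩ := (Submodule.mem_torsion_iff m).1 hm
    have hs' : (s : R) • m = 0 := hs
    exact (Submodule.mem_torsion_iff (g m)).2 ⟨s, by
      show (s : R) • g m = 0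
      rw [← map_smul, hs', map_zero]⟩
  -- N = preimage of torsion of M₂
  set N : Submodule R M₁ := (Submodule.torsion R M₂).comap g with hN
  have hr2N : ∀ n : N, r₂ • (n : M₁) ∈ LinearMap.range f := by
    intro n
    have h1 : r₂ • g (n : M₁) = 0 := by
      have := ha₂ ⟨g (n : M₁), n.2⟩
      exact congrArg Subtype.val this
    have : g (r₂ • (n : M₁)) = 0 := by rw [map_smul]; exact h1
    simpa [LinearMap.mem_range] using (hfg _).1 this
  let c : N →ₗ[R] LinearMap.range f :=
    LinearMap.codRestrict (LinearMap.range f) (r₂ • N.subtype) hr2N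
  let β : N →ₗ[R] M₀ := (LinearEquiv.ofInjective f hf).symm.toLinearMap ∘ₗ c
  have hβ : ∀ n : N, f (β n) = r₂ • (n : M₁) := by
    intro n
    exact LinearEquiv.ofInjective_symm_apply (f := f) (h := hf) (c n)
  -- torsion of N corresponds to torsion of β
  have hNtors : ∀ n : N, (n : M₁) ∈ Submodule.torsion R M₁ ↔ β n ∈ Submodule.torsion R M₀ := by
    intro n
    constructor
    · intro h
      obtain ⟨s, hs⟩ := (Submodule.mem_torsion_iff _).1 h
      have hs' : (s : R) • (n : M₁) = 0 := hs
      refine (Submodule.mem_torsion_iff _).2 ⟨s, ?_⟩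
      show (s : R) • β n = 0
      apply hf
      rw [map_smul, map_zero, hβ, smul_comm, hs', smul_zero]
    · intro h
      have hr0 : r₀ • β n = 0 := congrArg Subtype.val (ha₀ ⟨β n, h⟩)
      refine (Submodule.mem_torsion_iff _).2
        ⟨⟨r₀ * r₂, mem_nonZeroDivisors_of_ne_zero (mul_ne_zero hr₀ hr₂)⟩, ?_⟩
      show (r₀ * r₂) • (n : M₁) = 0
      rw [mul_smul, ← hβ, ← map_smul, hr0, map_zero]
  constructor
  · -- almost triviality of torsion of M₁
    refine ⟨r₀ * r₂, mul_ne_zero hr₀ hr₂, ?_⟩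
    rintro ⟨m, hm⟩
    have hmN : m ∈ N := hgt m hm
    ext
    show (r₀ * r₂) • m = 0
    obtain ⟨s, hs⟩ := (Submodule.mem_torsion_iff m).1 hm
    have hb : β ⟨m, hmN⟩ ∈ Submodule.torsion R M₀ := (hNtors ⟨m, hmN⟩).1 hm
    have hr0 : r₀ • β ⟨m, hmN⟩ = 0 := congrArg Subtype.val (ha₀ ⟨_, hb⟩)
    rw [mul_smul, ← hβ ⟨m, hmN⟩, ← map_smul, hr0, map_zero]
  · -- finiteness of M₁ ⧸ torsion
    set T₁ := Submodule.torsion R M₁ with hT₁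
    have hle : T₁ ≤ (Submodule.torsion R M₂).comap g := fun m hm => hgt m hm
    let gbar : (M₁ ⧸ T₁) →ₗ[R] (M₂ ⧸ Submodule.torsion R M₂) :=
      Submodule.mapQ T₁ (Submodule.torsion R M₂) g hle
    have hgbar_surj : Function.Surjective gbar := by
      intro y
      obtain ⟨m₂, rfl⟩ := Submodule.mkQ_surjective _ y
      obtain ⟨m, rfl⟩ := hg m₂
      exact ⟨T₁.mkQ m, by simp [gbar, Submodule.mapQ_apply]⟩
    let ρ : N →ₗ[R] (M₁ ⧸ T₁) := T₁.mkQ ∘ₗ N.subtype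
    have hker_gbar : LinearMap.ker gbar = LinearMap.range ρ := by
      ext q
      obtain ⟨m, rfl⟩ := Submodule.mkQ_surjective _ q
      simp only [LinearMap.mem_ker, LinearMap.mem_range]
      constructor
      · intro h
        have hm : g m ∈ Submodule.torsion R M₂ := by
          have : (Submodule.torsion R M₂).mkQ (g m) = 0 := by
            simpa [gbar, Submodule.mapQ_apply] using h
          simpa [Submodule.Quotient.mk_eq_zero] using this
        exact ⟨⟨m, hm⟩, rfl⟩
      · rintro ⟨n, hn⟩
        rw [← hn]
        show gbar (T₁.mkQ (n : M₁)) = 0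
        have : gbar (T₁.mkQ (n : M₁)) = (Submodule.torsion R M₂).mkQ (g (n : M₁)) := by
          simp [gbar, Submodule.mapQ_apply]
        rw [this, Submodule.mkQ_apply, Submodule.Quotient.mk_eq_zero]
        exact n.2
    let γ : N →ₗ[R] (M₀ ⧸ Submodule.torsion R M₀) := (Submodule.torsion R M₀).mkQ ∘ₗ β
    have hker : LinearMap.ker ρ = LinearMap.ker γ := by
      ext n
      simp only [LinearMap.mem_ker, ρ, γ, LinearMap.comp_apply, Submodule.subtype_apply,
        Submodule.mkQ_apply, Submodule.Quotient.mk_eq_zero]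
      exact hNtors n
    -- range of γ is finite
    haveI : IsNoetherian R (M₀ ⧸ Submodule.torsion R M₀) :=
      isNoetherian_of_isNoetherianRing_of_finite R _
    have hγfg : (LinearMap.range γ).FG := IsNoetherian.noetherian _
    haveI : Module.Finite R (LinearMap.range γ) := Module.Finite.iff_fg.2 hγfg
    let e : LinearMap.range ρ ≃ₗ[R] LinearMap.range γ :=
      (ρ.quotKerEquivRange.symm.trans (Submodule.quotEquivOfEq _ _ hker)).trans
        γ.quotKerEquivRange
    haveI : Module.Finite R (LinearMap.range ρ) := Module.Finite.equiv e.symm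
    have hkerfg : (LinearMap.ker gbar).FG := by
      rw [hker_gbar]; exact Module.Finite.iff_fg.1 inferInstance
    have htopfg : ((⊤ : Submodule R (M₁ ⧸ T₁)).map gbar).FG := by
      rw [Submodule.map_top, LinearMap.range_eq_top.2 hgbar_surj]
      exact Module.finite_def.1 hfin₂
    have : (⊤ : Submodule R (M₁ ⧸ T₁)).FG :=
      Submodule.fg_of_fg_map_of_fg_inf_ker gbar htopfg (by rwa [top_inf_eq])
    exact Module.finite_def.2 this
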